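/- Let (M, d) be a metric space, V a finite nonempty vertex type, G a connected simple graph on V, and D ≥ 1 a natural number such that the graph distance in G between any two vertices is at most D. Let r > 0 and let x : V → M satisfy φ(x) < r²/(2·D), where φ(x) = (1/2) · Σ over unordered edges {i,j} of G of d(x i, x j)². Then there exists y ∈ M such that d(x i, y) < r for every i ∈ V. -/

import Mathlib

lemma dist_le_sum_edges {M : Type*} [MetricSpace M] {V : Type*}
    {G : SimpleGraph V} (x : V → M) :
    ∀ {u v : V} (p : G.Walk u v),
      dist (x u) (x v) ≤
        (p.edges.map (Sym2.lift ⟨fun i j => dist (x i) (x j),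
          fun i j => by simp [dist_comm]⟩)).sum
  | _, _, SimpleGraph.Walk.nil => by simp
  | u, v, SimpleGraph.Walk.cons h q => by
    simp only [SimpleGraph.Walk.edges_cons, List.map_cons, List.sum_cons, Sym2.lift_mk]
    calc dist (x u) (x v) ≤ dist (x u) (x _) + dist (x _) (x v) := dist_triangle _ _ _
      _ ≤ _ := by gcongr; exact dist_le_sum_edges x q

theorem stmt_13 {M : Type*} [MetricSpace M] {V : Type*} [Fintype V] [Nonempty V]
    [DecidableEq V] (G : SimpleGraph V) [DecidableRel G.Adj] (hG : G.Connected)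
    (D : ℕ) (hD₁ : 1 ≤ D) (hD : ∀ p q : V, G.dist p q ≤ D)
    (r : ℝ) (hr : 0 < r)
    (φ : (V → M) → ℝ)
    (hφ : ∀ x : V → M, φ x = (1 / 2) * ∑ e ∈ G.edgeFinset,
      Sym2.lift ⟨fun i j => dist (x i) (x j) ^ 2, fun i j => by simp [dist_comm]⟩ e)
    (x : V → M) (hx : φ x < r ^ 2 / (2 * (D : ℝ))) :
    ∃ y : M, ∀ i : V, dist (x i) y < r := by
  obtain ⟨i₀⟩ := ‹Nonempty V›
  set g : Sym2 V → ℝ := Sym2.lift ⟨fun i j => dist (x i) (x j), fun i j => by simp [dist_comm]⟩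
  set f : Sym2 V → ℝ := Sym2.lift ⟨fun i j => dist (x i) (x j) ^ 2,
    fun i j => by simp [dist_comm]⟩
  have hgf : ∀ e, g e ^ 2 = f e := by
    intro e; induction e using Sym2.inductionOn with
    | hf i j => simp [g, f]
  have hg0 : ∀ e, 0 ≤ g e := by
    intro e; induction e using Sym2.inductionOn with
    | hf i j => simp [g, dist_nonneg]
  have hf0 : ∀ e, 0 ≤ f e := fun e => by rw [← hgf]; positivity
  -- sum over edge set bound
  have hsum : ∑ e ∈ G.edgeFinset, f e < r ^ 2 / D := by
    have := hx
    rw [hφ] at this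
    have hDpos : (0:ℝ) < D := by positivity
    have h2D : r ^ 2 / (2 * (D:ℝ)) = (r ^ 2 / D) / 2 := by
      rw [div_div]; ring_nf
    rw [h2D] at this
    change 1 / 2 * ∑ e ∈ G.edgeFinset, f e < _ at this
    linarith
  refine ⟨x i₀, fun i => ?_⟩
  obtain ⟨p, hp⟩ := (hG i i₀).exists_walk_length_eq_dist
  have hpath : p.IsPath := p.isPath_of_length_eq_dist hp
  have hlen : p.length ≤ D := hp ▸ hD i i₀
  -- key estimates
  have h1 : dist (x i) (x i₀) ≤ (p.edges.map g).sum := dist_le_sum_edges x p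
  have hnodup : p.edges.Nodup := hpath.edges_nodup
  have h2 : (p.edges.map g).sum = ∑ e ∈ p.edges.toFinset, g e :=
    (List.sum_toFinset g hnodup).symm
  have hcard : p.edges.toFinset.card = p.length := by
    rw [List.toFinset_card_of_nodup hnodup, SimpleGraph.Walk.length_edges]
  have hsub : p.edges.toFinset ⊆ G.edgeFinset := by
    intro e he
    rw [List.mem_toFinset] at he
    exact SimpleGraph.mem_edgeFinset.mpr (p.edges_subset_edgeSet he)
  have hCS : (∑ e ∈ p.edges.toFinset, g e) ^ 2 ≤
      p.edges.toFinset.card * ∑ e ∈ p.edges.toFinset, g e ^ 2 :=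
    sq_sum_le_card_mul_sum_sq
  have h3 : ∑ e ∈ p.edges.toFinset, g e ^ 2 ≤ ∑ e ∈ G.edgeFinset, f e := by
    calc ∑ e ∈ p.edges.toFinset, g e ^ 2 = ∑ e ∈ p.edges.toFinset, f e := by
          simp_rw [hgf]
      _ ≤ ∑ e ∈ G.edgeFinset, f e := Finset.sum_le_sum_of_subset_of_nonneg hsub
          (fun e _ _ => hf0 e)
  have hDpos : (0:ℝ) < D := by exact_mod_cast hD₁
  have hsq : dist (x i) (x i₀) ^ 2 < r ^ 2 := by
    have hnn : (0:ℝ) ≤ ∑ e ∈ p.edges.toFinset, g e :=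
      Finset.sum_nonneg fun e _ => hg0 e
    have hle : dist (x i) (x i₀) ^ 2 ≤ (∑ e ∈ p.edges.toFinset, g e) ^ 2 := by
      apply pow_le_pow_left₀ dist_nonneg (h1.trans_eq h2)
    have hcardD : (p.edges.toFinset.card : ℝ) ≤ D := by
      exact_mod_cast hcard ▸ hlen
    calc dist (x i) (x i₀) ^ 2 ≤ (∑ e ∈ p.edges.toFinset, g e) ^ 2 := hle
      _ ≤ p.edges.toFinset.card * ∑ e ∈ p.edges.toFinset, g e ^ 2 := hCS
      _ ≤ D * ∑ e ∈ G.edgeFinset, f e := by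
          apply mul_le_mul hcardD h3 (Finset.sum_nonneg fun e _ => sq_nonneg _) hDpos.le
      _ < D * (r ^ 2 / D) := by exact mul_lt_mul_of_pos_left hsum hDpos
      _ = r ^ 2 := by field_simp
  exact lt_of_pow_lt_pow_left₀ 2 hr.le hsq
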